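/- If the three qubit observables M₁, M₂, M₃ (self-adjoint operators on ℂ² with −1 ≤ M_i ≤ 1) are such that some pair {M_i, M_j} arises from a joint POVM (is compatible), then tr(X M₁ + Y M₂ + Z M₃) ≤ 2(√2 + 1), where X, Y, Z are the Pauli matrices. Moreover the bound is attained, e.g., by M₁ = M₂ = (X+Y)/√2 and M₃ = Z. -/

import Mathlib

open Matrix
open scoped ComplexOrder

noncomputable section

def σX : Matrix (Fin 2) (Fin 2) ℂ := !![0, 1; 1, 0]
def σY : Matrix (Fin 2) (Fin 2) ℂ := !![0, -Complex.I; Complex.I, 0]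
def σZ : Matrix (Fin 2) (Fin 2) ℂ := !![1, 0; 0, -1]

/-- Two dichotomic qubit observables are compatible if they arise as the two marginals
of a single joint 4-outcome POVM. -/
def PairCompatible (M N : Matrix (Fin 2) (Fin 2) ℂ) : Prop :=
  ∃ E : Fin 2 → Fin 2 → Matrix (Fin 2) (Fin 2) ℂ,
    (∀ a b, (E a b).PosSemidef) ∧ (∑ a, ∑ b, E a b) = 1 ∧
    M = E 0 0 + E 0 1 - E 1 0 - E 1 1 ∧
    N = E 0 0 - E 0 1 + E 1 0 - E 1 1

/- ### Auxiliary general lemmas -/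

lemma psd_trace_re_nonneg {n : ℕ} {A : Matrix (Fin n) (Fin n) ℂ} (hA : A.PosSemidef) :
    0 ≤ (A.trace).re := by
  rw [Matrix.trace, Complex.re_sum]
  apply Finset.sum_nonneg
  intro i _
  have h := hA.dotProduct_mulVec_nonneg (Pi.single i 1)
  have h' : 0 ≤ A i i := by
    simpa [← Pi.single_star, single_dotProduct, Matrix.mulVec_single] using h
  simpa [Matrix.diag_apply] using (Complex.le_def.mp h').1

lemma trace_mul_re_nonneg {n : ℕ} {A B : Matrix (Fin n) (Fin n) ℂ}
    (hA : A.PosSemidef) (hB : B.PosSemidef) : 0 ≤ ((A * B).trace).re := by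
  obtain ⟨C, rfl⟩ : ∃ C : Matrix (Fin n) (Fin n) ℂ, A = Cᴴ * C := by
    open scoped MatrixOrder in
    obtain ⟨X, hX, -, h⟩ := sub_zero A ▸ CFC.exists_sqrt_of_isSelfAdjoint_of_quasispectrumRestricts
      hA.isHermitian (QuasispectrumRestricts.nnreal_of_nonneg hA.nonneg)
    exact ⟨X, by rw [sub_zero] at h; rw [← h, ← Matrix.star_eq_conjTranspose, hX.star_eq]⟩
  rw [Matrix.mul_assoc, Matrix.trace_mul_comm]
  exact psd_trace_re_nonneg (by simpa [Matrix.mul_assoc] using hB.mul_mul_conjTranspose_same C)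

lemma smul_psd {A : Matrix (Fin 2) (Fin 2) ℂ} (hA : A.PosSemidef) {r : ℝ} (hr : 0 ≤ r) :
    (((r : ℂ)) • A).PosSemidef := by
  rw [Matrix.posSemidef_iff_dotProduct_mulVec]
  constructor
  · rw [Matrix.IsHermitian, conjTranspose_smul]
    simp [hA.isHermitian.eq, Complex.conj_ofReal]
  · intro x
    rw [Matrix.smul_mulVec, dotProduct_smul, smul_eq_mul]
    exact mul_nonneg (by exact_mod_cast Complex.zero_le_real.mpr hr) (hA.dotProduct_mulVec_nonneg x)

lemma psd_aux {H : Matrix (Fin 2) (Fin 2) ℂ} {c : ℝ} (hc : 0 < c)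
    (hH : Hᴴ = H) (hsq : H * H = ((c^2 : ℝ) : ℂ) • 1) :
    (((c : ℂ)) • 1 - H).PosSemidef := by
  set K : Matrix (Fin 2) (Fin 2) ℂ := ((c : ℂ)) • 1 - H with hK
  have hKh : Kᴴ = K := by
    rw [hK, conjTranspose_sub, conjTranspose_smul, conjTranspose_one, hH]
    simp [Complex.conj_ofReal]
  have hKK : K * K = ((2*c : ℝ) : ℂ) • K := by
    rw [hK]
    simp only [sub_mul, mul_sub, smul_mul_assoc, mul_smul_comm, Matrix.one_mul,
      Matrix.mul_one, hsq, smul_sub]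
    push_cast
    module
  have hEq : K = (((2*c)⁻¹ : ℝ) : ℂ) • (Kᴴ * K) := by
    rw [hKh, hKK, smul_smul]
    norm_cast
    rw [inv_mul_cancel₀ (by positivity), one_smul]
  rw [hEq]
  exact smul_psd (Matrix.posSemidef_conjTranspose_mul_self K) (by positivity)

/- ### Pauli matrix algebra -/

lemma hermX : σXᴴ = σX := by
  ext i j; fin_cases i <;> fin_cases j <;> simp [σX]

lemma hermY : σYᴴ = σY := by
  ext i j; fin_cases i <;> fin_cases j <;> simp [σY]

lemma hermZ : σZᴴ = σZ := by
  ext i j; fin_cases i <;> fin_cases j <;> simp [σZ]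

lemma sqX : σX * σX = 1 := by
  rw [σX, Matrix.mul_fin_two, Matrix.one_fin_two]; norm_num

lemma sqY : σY * σY = 1 := by
  rw [σY, Matrix.mul_fin_two, Matrix.one_fin_two]; norm_num [Complex.I_mul_I]

lemma sqZ : σZ * σZ = 1 := by
  rw [σZ, Matrix.mul_fin_two, Matrix.one_fin_two]; norm_num

lemma acXY : σX * σY + σY * σX = 0 := by
  rw [σX, σY, Matrix.mul_fin_two, Matrix.mul_fin_two]
  ext i j; fin_cases i <;> fin_cases j <;> simp

lemma acXZ : σX * σZ + σZ * σX = 0 := by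
  rw [σX, σZ, Matrix.mul_fin_two, Matrix.mul_fin_two]
  ext i j; fin_cases i <;> fin_cases j <;> simp

lemma acYZ : σY * σZ + σZ * σY = 0 := by
  rw [σY, σZ, Matrix.mul_fin_two, Matrix.mul_fin_two]
  ext i j; fin_cases i <;> fin_cases j <;> simp

lemma traceXY : (σX * σY).trace = 0 := by
  rw [σX, σY, Matrix.mul_fin_two, Matrix.trace_fin_two_of]; ring

lemma traceYX : (σY * σX).trace = 0 := by
  rw [σY, σX, Matrix.mul_fin_two, Matrix.trace_fin_two_of]; ring

/- ### The basic trace inequalities -/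

lemma pairing {H F : Matrix (Fin 2) (Fin 2) ℂ} {c : ℝ}
    (hH : (((c : ℂ)) • 1 - H).PosSemidef) (hF : F.PosSemidef) :
    ((H * F).trace).re ≤ c * ((F.trace).re) := by
  have h0 := trace_mul_re_nonneg hH hF
  rw [Matrix.sub_mul, smul_mul_assoc, Matrix.one_mul, Matrix.trace_sub, Matrix.trace_smul,
    Complex.sub_re, smul_eq_mul] at h0
  have : ((c : ℂ) * F.trace).re = c * (F.trace).re := by
    simp [Complex.mul_re]
  linarith [h0, this.symm.le]

lemma sq_of_anticomm {P Q : Matrix (Fin 2) (Fin 2) ℂ}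
    (hPP : P * P = 1) (hQQ : Q * Q = 1) (hac : P * Q + Q * P = 0) :
    ∀ ε : ℂ, ε * ε = 1 → (P + ε • Q) * (P + ε • Q) = ((2:ℝ) : ℂ) • 1 := by
  intro ε hε
  have hpq : P * Q = -(Q * P) := eq_neg_of_add_eq_zero_left hac
  rw [add_mul, mul_add, mul_add, hPP]
  simp only [smul_mul_assoc, mul_smul_comm, hpq, hQQ, smul_smul, hε, one_smul, smul_neg]
  push_cast
  module

lemma pair_bound {P Q M N : Matrix (Fin 2) (Fin 2) ℂ}
    (hP : Pᴴ = P) (hQ : Qᴴ = Q) (hPP : P * P = 1) (hQQ : Q * Q = 1)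
    (hac : P * Q + Q * P = 0) (hc : PairCompatible M N) :
    ((P * M).trace).re + ((Q * N).trace).re ≤ 2 * Real.sqrt 2 := by
  obtain ⟨E, hpos, hsum, hM, hN⟩ := hc
  have s2 : (0:ℝ) < Real.sqrt 2 := by positivity
  have sq2 : ∀ H : Matrix (Fin 2) (Fin 2) ℂ, Hᴴ = H → H * H = ((2:ℝ) : ℂ) • 1 →
      (((Real.sqrt 2 : ℝ) : ℂ) • 1 - H).PosSemidef := by
    intro H h1 h2
    refine psd_aux s2 h1 ?_
    rw [h2]
    norm_num [Real.sq_sqrt]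
  have hsum1 : (P + Q) * (P + Q) = ((2:ℝ) : ℂ) • 1 := by
    have := sq_of_anticomm hPP hQQ hac 1 (by norm_num)
    simpa using this
  have hsum2 : (P - Q) * (P - Q) = ((2:ℝ) : ℂ) • 1 := by
    have := sq_of_anticomm hPP hQQ hac (-1) (by norm_num)
    simpa [sub_eq_add_neg] using this
  have hneg : ∀ H : Matrix (Fin 2) (Fin 2) ℂ, H * H = ((2:ℝ) : ℂ) • 1 →
      (-H) * (-H) = ((2:ℝ) : ℂ) • 1 := by intro H h; simpa using h
  have k1 := sq2 (P + Q) (by rw [conjTranspose_add, hP, hQ]) hsum1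
  have k2 := sq2 (P - Q) (by rw [conjTranspose_sub, hP, hQ]) hsum2
  have k3 := sq2 (-(P - Q)) (by rw [conjTranspose_neg, conjTranspose_sub, hP, hQ]) (hneg _ hsum2)
  have k4 := sq2 (-(P + Q)) (by rw [conjTranspose_neg, conjTranspose_add, hP, hQ]) (hneg _ hsum1)
  have b1 := pairing k1 (hpos 0 0)
  have b2 := pairing k2 (hpos 0 1)
  have b3 := pairing k3 (hpos 1 0)
  have b4 := pairing k4 (hpos 1 1)
  have key : P * M + Q * N
      = (P + Q) * E 0 0 + (P - Q) * E 0 1 + (-(P - Q)) * E 1 0 + (-(P + Q)) * E 1 1 := by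
    rw [hM, hN]
    noncomm_ring
  have tsum : ((E 0 0).trace).re + ((E 0 1).trace).re + ((E 1 0).trace).re
      + ((E 1 1).trace).re = 2 := by
    have : (E 0 0 + E 0 1 + (E 1 0 + E 1 1)).trace = (1 : Matrix (Fin 2) (Fin 2) ℂ).trace := by
      rw [← hsum]; congr 1; simp [Fin.sum_univ_two]
    rw [Matrix.trace_add, Matrix.trace_add, Matrix.trace_add, Matrix.trace_one] at this
    have := congrArg Complex.re this
    simp only [Complex.add_re] at this
    norm_num at this
    linarith [this]
  have keytr : ((P * M).trace).re + ((Q * N).trace).re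
      = (((P + Q) * E 0 0).trace).re + (((P - Q) * E 0 1).trace).re
        + (((-(P - Q)) * E 1 0).trace).re + (((-(P + Q)) * E 1 1).trace).re := by
    have := congrArg (fun A : Matrix (Fin 2) (Fin 2) ℂ => (A.trace).re) key
    simpa [Matrix.trace_add, Complex.add_re] using this
  rw [keytr]
  nlinarith [b1, b2, b3, b4, tsum, s2.le]

lemma single_bound {P M : Matrix (Fin 2) (Fin 2) ℂ}
    (h1 : (((1:ℝ) : ℂ) • 1 - P).PosSemidef) (h2 : (((1:ℝ) : ℂ) • 1 - (-P)).PosSemidef)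
    (hm1 : (1 - M).PosSemidef) (hm2 : (1 + M).PosSemidef) :
    ((P * M).trace).re ≤ 2 := by
  have a := pairing h1 hm2
  have b := pairing h2 hm1
  rw [Matrix.mul_add, Matrix.trace_add, Complex.add_re, Matrix.mul_one] at a
  rw [Matrix.neg_mul, Matrix.mul_sub, Matrix.trace_neg, Matrix.trace_sub, Matrix.mul_one] at b
  simp only [Complex.neg_re, Complex.sub_re] at b
  have t1 : ((1 + M : Matrix (Fin 2) (Fin 2) ℂ).trace).re = 2 + (M.trace).re := by
    rw [Matrix.trace_add, Matrix.trace_one]; simp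
  have t2 : ((1 - M : Matrix (Fin 2) (Fin 2) ℂ).trace).re = 2 - (M.trace).re := by
    rw [Matrix.trace_sub, Matrix.trace_one]; simp
  rw [t1] at a
  rw [t2] at b
  linarith

/- ### Positivity facts for Pauli matrices -/

lemma pauli_one_psd {P : Matrix (Fin 2) (Fin 2) ℂ} (hP : Pᴴ = P) (hPP : P * P = 1) :
    (((1:ℝ) : ℂ) • 1 - P).PosSemidef := by
  refine psd_aux one_pos hP ?_
  rw [hPP]; norm_num

lemma pauli_one_psd_neg {P : Matrix (Fin 2) (Fin 2) ℂ} (hP : Pᴴ = P) (hPP : P * P = 1) :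
    (((1:ℝ) : ℂ) • 1 - (-P)).PosSemidef := by
  refine psd_aux one_pos (by rw [conjTranspose_neg, hP]) ?_
  rw [neg_mul_neg, hPP]; norm_num

/- ### Main theorem -/

/-- If some pair among three qubit observables M₁, M₂, M₃ is compatible, then
`tr(X M₁ + Y M₂ + Z M₃) ≤ 2(√2 + 1)`; moreover the bound is attained by
`M₁ = M₂ = (X+Y)/√2`, `M₃ = Z`. -/
theorem genuine_triplewise_incompatibility_witness :
    (∀ M : Fin 3 → Matrix (Fin 2) (Fin 2) ℂ,
      (∀ i, (M i).IsHermitian) →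
      (∀ i, (1 - M i).PosSemidef) → (∀ i, (1 + M i).PosSemidef) →
      (∃ i j : Fin 3, i ≠ j ∧ PairCompatible (M i) (M j)) →
      ((σX * M 0 + σY * M 1 + σZ * M 2).trace).re ≤ 2 * (Real.sqrt 2 + 1))
    ∧
    ((σX * (((Real.sqrt 2)⁻¹ : ℝ) • (σX + σY))
      + σY * (((Real.sqrt 2)⁻¹ : ℝ) • (σX + σY))
      + σZ * σZ).trace).re = 2 * (Real.sqrt 2 + 1)
    ∧ PairCompatible (((Real.sqrt 2)⁻¹ : ℝ) • (σX + σY))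
        (((Real.sqrt 2)⁻¹ : ℝ) • (σX + σY)) := by
  have hs2 : Real.sqrt 2 * Real.sqrt 2 = 2 := Real.mul_self_sqrt (by norm_num)
  have hs2pos : (0:ℝ) < Real.sqrt 2 := by positivity
  -- real smul is complex smul
  have rsm : ∀ (r : ℝ) (A : Matrix (Fin 2) (Fin 2) ℂ), r • A = ((r : ℂ)) • A := by
    intro r A; ext i j; simp [Matrix.smul_apply, Complex.real_smul]
  refine ⟨?_, ?_, ?_⟩
  · -- the inequality
    intro M hherm hm1 hm2 hpair
    obtain ⟨i, j, hij, hcomp⟩ := hpair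
    have texp : ((σX * M 0 + σY * M 1 + σZ * M 2).trace).re
        = ((σX * M 0).trace).re + ((σY * M 1).trace).re + ((σZ * M 2).trace).re := by
      rw [Matrix.trace_add, Matrix.trace_add]
      simp [Complex.add_re]
    have s0 : ((σX * M 0).trace).re ≤ 2 :=
      single_bound (pauli_one_psd hermX sqX) (pauli_one_psd_neg hermX sqX) (hm1 0) (hm2 0)
    have s1 : ((σY * M 1).trace).re ≤ 2 :=
      single_bound (pauli_one_psd hermY sqY) (pauli_one_psd_neg hermY sqY) (hm1 1) (hm2 1)
    have s2 : ((σZ * M 2).trace).re ≤ 2 :=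
      single_bound (pauli_one_psd hermZ sqZ) (pauli_one_psd_neg hermZ sqZ) (hm1 2) (hm2 2)
    rw [texp]
    fin_cases i <;> fin_cases j
    · exact absurd rfl hij
    · have hp : ((σX * M 0).trace).re + ((σY * M 1).trace).re ≤ 2 * Real.sqrt 2 :=
        pair_bound hermX hermY sqX sqY acXY hcomp
      linarith
    · have hp : ((σX * M 0).trace).re + ((σZ * M 2).trace).re ≤ 2 * Real.sqrt 2 :=
        pair_bound hermX hermZ sqX sqZ acXZ hcomp
      linarith
    · have hp : ((σY * M 1).trace).re + ((σX * M 0).trace).re ≤ 2 * Real.sqrt 2 :=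
        pair_bound hermY hermX sqY sqX (by rw [add_comm]; exact acXY) hcomp
      linarith
    · exact absurd rfl hij
    · have hp : ((σY * M 1).trace).re + ((σZ * M 2).trace).re ≤ 2 * Real.sqrt 2 :=
        pair_bound hermY hermZ sqY sqZ acYZ hcomp
      linarith
    · have hp : ((σZ * M 2).trace).re + ((σX * M 0).trace).re ≤ 2 * Real.sqrt 2 :=
        pair_bound hermZ hermX sqZ sqX (by rw [add_comm]; exact acXZ) hcomp
      linarith
    · have hp : ((σZ * M 2).trace).re + ((σY * M 1).trace).re ≤ 2 * Real.sqrt 2 :=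
        pair_bound hermZ hermY sqZ sqY (by rw [add_comm]; exact acYZ) hcomp
      linarith
    · exact absurd rfl hij
  · -- the value of the witness
    rw [mul_smul_comm, mul_smul_comm, Matrix.mul_add, Matrix.mul_add, sqX, sqY, sqZ,
      Matrix.trace_add, Matrix.trace_add, Matrix.trace_smul, Matrix.trace_smul,
      Matrix.trace_add, Matrix.trace_add, traceXY, traceYX, Matrix.trace_one]
    simp only [add_zero, zero_add, Complex.add_re, Complex.smul_re]
    norm_num
    field_simp
    nlinarith [hs2]
  · -- the witness pair is compatible
    set r : ℝ := (Real.sqrt 2)⁻¹ with hr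
    set Mc : Matrix (Fin 2) (Fin 2) ℂ := ((r : ℂ)) • (σX + σY) with hMc
    have hrw : (r : ℝ) • (σX + σY) = Mc := by rw [hMc, rsm]
    have hMch : Mcᴴ = Mc := by
      rw [hMc, conjTranspose_smul, conjTranspose_add, hermX, hermY]
      simp [Complex.conj_ofReal]
    have hMcsq : Mc * Mc = 1 := by
      have hA : (σX + σY) * (σX + σY) = ((2:ℝ) : ℂ) • 1 := by
        have := sq_of_anticomm sqX sqY acXY 1 (by norm_num)
        simpa using this
      rw [hMc, smul_mul_assoc, mul_smul_comm, smul_smul, hA, smul_smul]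
      have : ((r : ℂ)) * (r : ℂ) * ((2:ℝ) : ℂ) = 1 := by
        have : (r : ℝ) * r * 2 = 1 := by
          rw [hr, ← mul_inv, hs2]; norm_num
        exact_mod_cast congrArg (fun x : ℝ => (x : ℂ)) this
      rw [this, one_smul]
    have hplus : (1 + Mc).PosSemidef := by
      have := pauli_one_psd_neg hMch hMcsq
      simpa [sub_neg_eq_add] using this
    have hminus : (1 - Mc).PosSemidef := by
      have := pauli_one_psd hMch hMcsq
      simpa using this
    refine ⟨![![((1/2 : ℝ) : ℂ) • (1 + Mc), 0], ![0, ((1/2 : ℝ) : ℂ) • (1 - Mc)]], ?_, ?_, ?_, ?_⟩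
    · intro a b
      fin_cases a <;> fin_cases b <;>
        simp only [Matrix.cons_val_zero, Matrix.cons_val_one, Matrix.head_cons]
      · exact smul_psd hplus (by norm_num)
      · exact Matrix.PosSemidef.zero
      · exact Matrix.PosSemidef.zero
      · exact smul_psd hminus (by norm_num)
    · simp only [Fin.sum_univ_two, Matrix.cons_val_zero, Matrix.cons_val_one, Matrix.head_cons]
      push_cast
      module
    · rw [hrw]
      simp only [Matrix.cons_val_zero, Matrix.cons_val_one, Matrix.head_cons]
      push_cast
      module
    · rw [hrw]
      simp only [Matrix.cons_val_zero, Matrix.cons_val_one, Matrix.head_cons]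
      push_cast
      module

end
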